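/- Let T be an ℝ-tree and let g, h be hyperbolic isometries of T satisfying ‖gh‖ = ‖g‖ + ‖h‖ (equivalently, their axes meet coherently or in a point). Then for all positive integers m, n, one has ‖g^m h^n‖ = m·‖g‖ + n·‖h‖. -/

import Mathlib

/-- A geodesic metric space: every pair of points is joined by a geodesic segment. -/
def IsGeodesicSpace (T : Type*) [MetricSpace T] : Prop :=
  ∀ x y : T, ∃ f : ℝ → T, f 0 = x ∧ f (dist x y) = y ∧
    ∀ s ∈ Set.Icc (0 : ℝ) (dist x y), ∀ t ∈ Set.Icc (0 : ℝ) (dist x y),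
      dist (f s) (f t) = |s - t|

/-- The 0-hyperbolic four point condition. -/
def ZeroHyperbolic (T : Type*) [MetricSpace T] : Prop :=
  ∀ x y z w : T,
    dist x y + dist z w ≤ max (dist x z + dist y w) (dist x w + dist y z)

/-- An ℝ-tree is a geodesic, 0-hyperbolic metric space. -/
def IsRTree (T : Type*) [MetricSpace T] : Prop :=
  IsGeodesicSpace T ∧ ZeroHyperbolic T

/-- Translation length of an isometry. -/
noncomputable def translationLength {T : Type*} [MetricSpace T] (g : T ≃ᵢ T) : ℝ :=
  ⨅ x : T, dist x (g x)

section Aux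
variable {T : Type*} [MetricSpace T]

lemma mid_unique (h0 : ZeroHyperbolic T) {P Z x y : T}
    (hx : dist P x + dist x Z = dist P Z)
    (h1 : dist P y = dist P x) (h2 : dist y Z = dist x Z) : x = y := by
  have H := h0 x y P Z
  have t1 := dist_triangle P x Z
  have c1 : dist x P = dist P x := dist_comm x P
  have c2 : dist y P = dist P y := dist_comm y P
  have hxy : dist x y ≤ 0 := by
    rcases le_max_iff.1 H with H' | H' <;> linarith
  exact dist_le_zero.1 hxy

lemma between_trans (h0 : ZeroHyperbolic T) {x y z w : T}
    (h1 : dist x z = dist x y + dist y z)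
    (h2 : dist y w = dist y z + dist z w)
    (h3 : 0 < dist y z) :
    dist x w = dist x y + dist y z + dist z w := by
  have H := h0 x z y w
  have t1 := dist_triangle4 x y z w
  rcases le_max_iff.1 H with H' | H'
  · linarith
  · rw [dist_comm z y] at H'; linarith

lemma chain_step (h0 : ZeroHyperbolic T) (c : ℕ → T) (L : ℕ → ℝ)
    (hL : ∀ i, 0 < L i)
    (h1 : ∀ i, dist (c i) (c (i+1)) = L i)
    (h2 : ∀ i, dist (c i) (c (i+2)) = L i + L (i+1)) :
    ∀ k, dist (c 0) (c (k+1)) = dist (c 0) (c k) + L k := by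
  intro k
  induction k with
  | zero => simp [h1 0]
  | succ k ih =>
      have hb := between_trans h0 (x := c 0) (y := c k) (z := c (k+1)) (w := c (k+2))
        (by rw [ih, h1]) (by rw [h2, h1, h1]) (by rw [h1]; exact hL k)
      rw [hb, ih, h1, h1]

lemma chain_dist (h0 : ZeroHyperbolic T) (c : ℕ → T) (L : ℕ → ℝ)
    (hL : ∀ i, 0 < L i)
    (h1 : ∀ i, dist (c i) (c (i+1)) = L i)
    (h2 : ∀ i, dist (c i) (c (i+2)) = L i + L (i+1)) :
    ∀ k, dist (c 0) (c k) = ∑ i ∈ Finset.range k, L i := by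
  intro k
  induction k with
  | zero => simp
  | succ k ih => rw [chain_step h0 c L hL h1 h2 k, ih, Finset.sum_range_succ]

lemma tlen_le [Nonempty T] (f : T ≃ᵢ T) (x : T) : translationLength f ≤ dist x (f x) :=
  ciInf_le ⟨0, fun _ ⟨y, hy⟩ => hy ▸ dist_nonneg⟩ x

lemma pow_apply_succ (f : T ≃ᵢ T) (k : ℕ) (x : T) : (f^(k+1)) x = f ((f^k) x) := by
  rw [pow_succ']; rfl

lemma iter_le (f : T ≃ᵢ T) (x : T) : ∀ k : ℕ, dist x ((f^k) x) ≤ k * dist x (f x) := by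
  intro k
  induction k with
  | zero => simp
  | succ k ih =>
      have h1 : ((f^(k+1)) x) = f ((f^k) x) := pow_apply_succ f k x
      have h2 : dist (f x) ((f^(k+1)) x) = dist x ((f^k) x) := by
        rw [h1]; exact f.dist_eq x ((f^k) x)
      have h3 := dist_triangle x (f x) ((f^(k+1)) x)
      push_cast
      linarith

lemma tlen_ge [Nonempty T] (f : T ≃ᵢ T) (p : T) (c : ℝ)
    (H : ∀ k : ℕ, (k : ℝ) * c ≤ dist p ((f^k) p)) : c ≤ translationLength f := by
  apply le_ciInf
  intro x
  by_contra hcon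
  push_neg at hcon
  have hd : 0 < c - dist x (f x) := by linarith
  obtain ⟨k, hk⟩ := exists_nat_gt ((2 * dist p x) / (c - dist x (f x)))
  have hk2 : 2 * dist p x < k * (c - dist x (f x)) := by
    rw [div_lt_iff₀ hd] at hk
    linarith
  have h1 : dist p ((f^k) p) ≤ 2 * dist p x + dist x ((f^k) x) := by
    have e1 := dist_triangle4 p x ((f^k) x) ((f^k) p)
    have e2 : dist ((f^k) x) ((f^k) p) = dist x p := (f^k).dist_eq x p
    rw [e2, dist_comm x p] at e1
    linarith
  have h2 := iter_le f x k
  have h3 := H k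
  nlinarith


lemma proj_ge (h0 : ZeroHyperbolic T) {γ : ℝ → T} (hγ : ∀ s t : ℝ, dist (γ s) (γ t) = |s - t|)
    {x : T} {δ : ℝ} (hmin : ∀ s, δ ≤ dist x (γ s)) (h00 : dist x (γ 0) = δ)
    {s : ℝ} (hs : 0 ≤ s) : dist x (γ s) = δ + s := by
  have hle : dist x (γ s) ≤ δ + s := by
    have := dist_triangle x (γ 0) (γ s)
    have e : dist (γ 0) (γ s) = s := by rw [hγ]; rw [abs_of_nonpos (by linarith)]; ring
    linarith
  have key : ∀ u : ℝ, 0 < u → u ≤ s → δ + s - u ≤ dist x (γ s) := by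
    intro u hu hus
    have H := h0 (γ 0) (γ s) (γ u) x
    have e1 : dist (γ 0) (γ s) = s := by rw [hγ, abs_of_nonpos (by linarith)]; ring
    have e2 : dist (γ 0) (γ u) = u := by rw [hγ, abs_of_nonpos (by linarith)]; ring
    have e3 : dist (γ s) (γ u) = s - u := by rw [hγ, abs_of_nonneg (by linarith)]
    have e4 : dist (γ u) x = dist x (γ u) := dist_comm _ _
    have e5 : dist (γ 0) x = δ := by rw [dist_comm]; exact h00
    have e6 : dist (γ s) x = dist x (γ s) := dist_comm _ _
    rw [e1, e2, e3, e4, e5, e6] at H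
    rcases le_max_iff.1 H with H' | H'
    · have := hmin u; linarith
    · have := hmin u; linarith
  have hge : δ + s ≤ dist x (γ s) := by
    rcases eq_or_lt_of_le hs with rfl | hs'
    · simpa using le_of_eq h00.symm
    · apply le_of_forall_pos_le_add
      intro ε hε
      have := key (min s ε) (lt_min hs' hε) (min_le_left _ _)
      have := min_le_right s ε
      linarith
  linarith

lemma proj_formula (h0 : ZeroHyperbolic T) {γ : ℝ → T} (hγ : ∀ s t : ℝ, dist (γ s) (γ t) = |s - t|)
    {x : T} {δ : ℝ} (hmin : ∀ s, δ ≤ dist x (γ s)) (h00 : dist x (γ 0) = δ)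
    (s : ℝ) : dist x (γ s) = δ + |s| := by
  rcases le_or_gt 0 s with hs | hs
  · rw [proj_ge h0 hγ hmin h00 hs, abs_of_nonneg hs]
  · have hγ' : ∀ a b : ℝ, dist (γ (-a)) (γ (-b)) = |a - b| := by
      intro a b; rw [hγ, ← abs_neg]; congr 1; ring
    have := proj_ge (γ := fun u => γ (-u)) h0 hγ' (fun u => hmin (-u))
      (by simpa using h00) (s := -s) (by linarith)
    simp only [neg_neg] at this
    rw [this, abs_of_neg hs]

lemma exists_proj (h0 : ZeroHyperbolic T) {γ : ℝ → T} (hγ : ∀ s t : ℝ, dist (γ s) (γ t) = |s - t|)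
    (x : T) : ∃ p : ℝ, ∀ s, dist x (γ s) = dist x (γ p) + |s - p| := by
  set φ : ℝ → ℝ := fun s => dist x (γ s) with hφ
  have hiso : Isometry γ := Isometry.of_dist_eq (fun a b => by rw [hγ, Real.dist_eq])
  have hcont : Continuous φ := continuous_const.dist hiso.continuous
  set R : ℝ := 2 * φ 0 + 1 with hR
  have hφ0 : 0 ≤ φ 0 := dist_nonneg
  have h0mem : (0:ℝ) ∈ Set.Icc (-R) R := by constructor <;> simp only [hR] <;> linarith
  obtain ⟨p, hpmem, hpmin⟩ := isCompact_Icc.exists_isMinOn ⟨0, h0mem⟩ hcont.continuousOn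
  have hglobal : ∀ s, φ p ≤ φ s := by
    intro s
    by_cases hmem : s ∈ Set.Icc (-R) R
    · exact hpmin hmem
    · have habs : R < |s| := by
        simp only [Set.mem_Icc, not_and_or, not_le] at hmem
        rcases hmem with h | h
        · rw [abs_of_neg (by linarith)]; linarith
        · rw [abs_of_pos (by linarith)]; linarith
      have htri : |s| ≤ φ s + φ 0 := by
        have t := dist_triangle (γ s) x (γ 0)
        have e : dist (γ s) (γ 0) = |s| := by rw [hγ]; simp
        rw [dist_comm (γ s) x] at t
        simp only [hφ]; rw [dist_comm x (γ 0)] at *; linarith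
      have hp0 : φ p ≤ φ 0 := hpmin h0mem
      simp only [hR] at habs
      linarith
  refine ⟨p, fun s => ?_⟩
  have hγ' : ∀ a b : ℝ, dist (γ (p + a)) (γ (p + b)) = |a - b| := by
    intro a b; rw [hγ]; congr 1; ring
  have := proj_formula (γ := fun u => γ (p + u)) h0 hγ'
    (fun u => hglobal (p + u)) (by simp [hφ]) (s - p)
  simpa using this


/-- No backtracking at the endpoint of the overlap: if two isometric lines meet only
at parameters `s = t ≤ 0`, then the backward ray of the first and forward ray of the
second diverge completely. -/
lemma opp_rays (h0 : ZeroHyperbolic T) {γ1 γ2 : ℝ → T}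
    (h1 : ∀ s t : ℝ, dist (γ1 s) (γ1 t) = |s - t|)
    (h2 : ∀ s t : ℝ, dist (γ2 s) (γ2 t) = |s - t|)
    (hQ : γ1 0 = γ2 0)
    (hsep : ∀ s t : ℝ, γ1 s = γ2 t → s = t ∧ s ≤ 0) :
    ∀ u v : ℝ, 0 < u → 0 < v → dist (γ1 (-u)) (γ2 v) = u + v := by
  intro u v hu hv
  have d1 : dist (γ1 (-u)) (γ2 0) = u := by rw [← hQ, h1]; simp [abs_of_nonpos, hu.le]
  have d2 : dist (γ1 0) (γ2 v) = v := by rw [hQ, h2]; simp [abs_of_nonpos, hv.le]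
  have hle : dist (γ1 (-u)) (γ2 v) ≤ u + v := by
    have := dist_triangle (γ1 (-u)) (γ2 0) (γ2 v)
    have e : dist (γ2 0) (γ2 v) = v := by rw [h2]; simp [abs_of_nonpos, hv.le]
    linarith
  by_contra hne
  set D := dist (γ1 (-u)) (γ2 v) with hD
  have hlt : D < u + v := lt_of_le_of_ne hle hne
  set α : ℝ := (u + v - D) / 2 with hα
  have hαpos : 0 < α := by simp only [hα]; linarith
  have hαu : α ≤ u := by
    have : v - u ≤ D := by
      have t := dist_triangle (γ1 0) (γ1 (-u)) (γ2 v)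
      have e : dist (γ1 0) (γ1 (-u)) = u := by rw [h1]; simp [abs_of_nonneg, hu.le]
      linarith
    simp only [hα]; linarith
  have hαv : α ≤ v := by
    have : u - v ≤ D := by
      have t := dist_triangle (γ1 (-u)) (γ2 v) (γ2 0)
      have e : dist (γ2 v) (γ2 0) = v := by
        rw [h2, abs_of_nonneg (by linarith : (0:ℝ) ≤ v - 0)]; ring
      linarith
    simp only [hα]; linarith
  -- m = γ1 (-α) is within v - α of γ2 v
  have hm2 : dist (γ1 (-α)) (γ2 v) ≤ v - α := by
    have H := h0 (γ1 (-α)) (γ2 v) (γ1 (-u)) (γ1 0)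
    have e1 : dist (γ1 (-α)) (γ1 (-u)) = u - α := by
      have harg : (-α:ℝ) - (-u) = u - α := by ring
      rw [h1, harg, abs_of_nonneg (by linarith)]
    have e2 : dist (γ1 (-α)) (γ1 0) = α := by
      have harg : (-α:ℝ) - 0 = -α := by ring
      rw [h1, harg, abs_neg, abs_of_nonneg hαpos.le]
    have e3 : dist (γ2 v) (γ1 (-u)) = D := by rw [dist_comm]
    have e4 : dist (γ2 v) (γ1 0) = v := by rw [dist_comm]; exact d2
    have e5 : dist (γ1 (-u)) (γ1 0) = u := by
      have harg : (-u:ℝ) - 0 = -u := by ring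
      rw [h1, harg, abs_neg, abs_of_nonneg hu.le]
    rw [e1, e2, e3, e4, e5] at H
    rcases le_max_iff.1 H with H' | H' <;> simp only [hα] at * <;> linarith
  have hm2' : dist (γ1 (-α)) (γ2 v) = v - α := by
    have t := dist_triangle (γ2 0) (γ1 (-α)) (γ2 v)
    have e : dist (γ2 0) (γ1 (-α)) = α := by
      rw [dist_comm, ← hQ, h1]; simp [abs_of_nonpos, hαpos.le]
    have e2 : dist (γ2 0) (γ2 v) = v := by rw [h2]; simp [abs_of_nonpos, hv.le]
    linarith
  -- midpoint uniqueness : γ2 α = γ1 (-α)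
  have hmid : γ2 α = γ1 (-α) := by
    apply mid_unique h0 (P := γ2 0) (Z := γ2 v)
    · have e1 : dist (γ2 0) (γ2 α) = α := by rw [h2]; simp [abs_of_nonpos, hαpos.le]
      have e2 : dist (γ2 α) (γ2 v) = v - α := by
        rw [h2, abs_of_nonpos (by linarith)]; ring
      have e3 : dist (γ2 0) (γ2 v) = v := by rw [h2]; simp [abs_of_nonpos, hv.le]
      rw [e1, e2, e3]; ring
    · have e1 : dist (γ2 0) (γ2 α) = α := by rw [h2]; simp [abs_of_nonpos, hαpos.le]
      have e2 : dist (γ2 0) (γ1 (-α)) = α := by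
        rw [← hQ, h1]; simp [abs_of_nonpos, hαpos.le]
      rw [e1, e2]
    · have e2 : dist (γ2 α) (γ2 v) = v - α := by
        rw [h2, abs_of_nonpos (by linarith)]; ring
      rw [hm2', e2]
  have := (hsep (-α) α hmid.symm).1
  linarith

/-- The bridge formula for two lines at positive distance. -/
lemma bridge (h0 : ZeroHyperbolic T) {γ1 γ2 : ℝ → T}
    (h1 : ∀ s t : ℝ, dist (γ1 s) (γ1 t) = |s - t|)
    (h2 : ∀ s t : ℝ, dist (γ2 s) (γ2 t) = |s - t|)
    {δ : ℝ} (hδ : 0 < δ)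
    (hmin1 : ∀ s, dist (γ2 0) (γ1 s) = δ + |s|)
    (hmin2 : ∀ t, dist (γ1 0) (γ2 t) = δ + |t|) :
    ∀ s t : ℝ, dist (γ1 s) (γ2 t) = |s| + δ + |t| := by
  intro s t
  have hle : dist (γ1 s) (γ2 t) ≤ |s| + δ + |t| := by
    have tri := dist_triangle4 (γ1 s) (γ1 0) (γ2 0) (γ2 t)
    have e1 : dist (γ1 s) (γ1 0) = |s| := by rw [h1]; simp
    have e2 : dist (γ1 0) (γ2 0) = δ := by have := hmin2 0; simpa using this
    have e3 : dist (γ2 0) (γ2 t) = |t| := by rw [h2]; simp [abs_sub_comm]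
    linarith
  have H := h0 (γ1 s) (γ2 0) (γ1 0) (γ2 t)
  have e1 : dist (γ1 s) (γ2 0) = δ + |s| := by rw [dist_comm]; exact hmin1 s
  have e2 : dist (γ1 0) (γ2 t) = δ + |t| := hmin2 t
  have e3 : dist (γ1 s) (γ1 0) = |s| := by rw [h1]; simp
  have e4 : dist (γ2 0) (γ2 t) = |t| := by rw [h2]; simp [abs_sub_comm]
  have e5 : dist (γ2 0) (γ1 0) = δ := by rw [dist_comm]; have := hmin2 0; simpa using this
  rw [e1, e2, e3, e4, e5] at H
  rcases le_max_iff.1 H with H' | H'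
  · linarith
  · linarith


lemma tlen_prod_le [Nonempty T] (G H : T ≃ᵢ T) {γ1 γ2 : ℝ → T} {A B s₀ t₀ : ℝ}
    (h1 : ∀ s t : ℝ, dist (γ1 s) (γ1 t) = |s - t|)
    (h2 : ∀ s t : ℝ, dist (γ2 s) (γ2 t) = |s - t|)
    (hG : ∀ t : ℝ, G (γ1 t) = γ1 (t + A)) (hH : ∀ t : ℝ, H (γ2 t) = γ2 (t + B))
    (hA : 0 ≤ A) (hB : 0 ≤ B) (hpt : γ1 s₀ = γ2 t₀) :
    translationLength (G * H) ≤ A + B := by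
  refine le_trans (tlen_le (G * H) (γ1 s₀)) ?_
  have e0 : (G * H) (γ1 s₀) = G (H (γ1 s₀)) := rfl
  have e1 : H (γ1 s₀) = γ2 (t₀ + B) := by rw [hpt, hH]
  have e2 : dist (γ1 s₀) (G (γ1 s₀)) = A := by
    rw [hG, h1, abs_of_nonpos (by linarith)]; ring
  have e3 : dist (G (γ1 s₀)) (G (H (γ1 s₀))) = B := by
    rw [G.dist_eq, e1, hpt, h2, abs_of_nonpos (by linarith)]; ring
  calc dist (γ1 s₀) ((G * H) (γ1 s₀)) ≤ dist (γ1 s₀) (G (γ1 s₀)) +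
        dist (G (γ1 s₀)) ((G * H) (γ1 s₀)) := dist_triangle _ _ _
    _ = A + B := by rw [e0] at *; rw [e2, e3]

lemma tlen_prod_ge_coherent [Nonempty T] (h0 : ZeroHyperbolic T) (G H : T ≃ᵢ T)
    {γ1 γ2 : ℝ → T} {A B s₀ t₀ : ℝ}
    (h1 : ∀ s t : ℝ, dist (γ1 s) (γ1 t) = |s - t|)
    (h2 : ∀ s t : ℝ, dist (γ2 s) (γ2 t) = |s - t|)
    (hG : ∀ t : ℝ, G (γ1 t) = γ1 (t + A)) (hH : ∀ t : ℝ, H (γ2 t) = γ2 (t + B))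
    (hA : 0 < A) (hB : 0 < B) (hpt : γ1 s₀ = γ2 t₀)
    (hcoh : ∀ s t : ℝ, γ1 s = γ2 t → s - s₀ = t - t₀) :
    A + B ≤ translationLength (G * H) := by
  classical
  set f := G * H with hf
  have hfap : ∀ x, f x = G (H x) := fun x => rfl
  set I : Set ℝ := {u | γ1 (s₀ + u) = γ2 (t₀ + u)} with hI
  have h0I : (0:ℝ) ∈ I := by simp only [hI, Set.mem_setOf_eq, add_zero]; exact hpt
  by_cases hbdd : BddAbove I
  · -- bounded overlap: use the endpoint of the overlap
    have hIc : IsClosed I := by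
      have c1 : Continuous fun u : ℝ => γ1 (s₀ + u) :=
        (Isometry.of_dist_eq fun a b => by rw [h1, Real.dist_eq]).continuous.comp
          (continuous_const.add continuous_id)
      have c2 : Continuous fun u : ℝ => γ2 (t₀ + u) :=
        (Isometry.of_dist_eq fun a b => by rw [h2, Real.dist_eq]).continuous.comp
          (continuous_const.add continuous_id)
      exact isClosed_eq c1 c2
    set e := sSup I with he
    have heI : e ∈ I := hIc.csSup_mem ⟨0, h0I⟩ hbdd
    set γ1' : ℝ → T := fun u => γ1 (s₀ + e + u) with hγ1'
    set γ2' : ℝ → T := fun u => γ2 (t₀ + e + u) with hγ2'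
    have h1' : ∀ s t : ℝ, dist (γ1' s) (γ1' t) = |s - t| := by
      intro s t; simp only [hγ1']; rw [h1]; congr 1; ring
    have h2' : ∀ s t : ℝ, dist (γ2' s) (γ2' t) = |s - t| := by
      intro s t; simp only [hγ2']; rw [h2]; congr 1; ring
    have hQ0 : γ1' 0 = γ2' 0 := by
      simp only [hγ1', hγ2', add_zero]
      simpa only [hI, Set.mem_setOf_eq, add_assoc] using heI
    have hsep : ∀ s t : ℝ, γ1' s = γ2' t → s = t ∧ s ≤ 0 := by
      intro s t hst
      simp only [hγ1', hγ2'] at hst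
      have h' : (s₀ + e + s) - s₀ = (t₀ + e + t) - t₀ := by
        apply hcoh _ _ (by rw [hst])
      have hst' : s = t := by linarith
      have hmem : e + s ∈ I := by
        simp only [hI, Set.mem_setOf_eq]
        rw [show s₀ + (e + s) = s₀ + e + s by ring,
          show t₀ + (e + s) = t₀ + e + t by rw [hst']; ring]
        exact hst
      have := le_csSup hbdd hmem
      exact ⟨hst', by linarith⟩
    have hsep2 : ∀ s t : ℝ, γ2' s = γ1' t → s = t ∧ s ≤ 0 := by
      intro s t hst
      obtain ⟨h', h''⟩ := hsep t s hst.symm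
      exact ⟨h'.symm, h' ▸ h''⟩
    have C1 := opp_rays h0 h1' h2' hQ0 hsep
    have C2 := opp_rays h0 h2' h1' hQ0.symm hsep2
    have hG' : ∀ u : ℝ, G (γ1' u) = γ1' (u + A) := by
      intro u; simp only [hγ1']; rw [hG]; congr 1; ring
    have hH' : ∀ u : ℝ, H (γ2' u) = γ2' (u + B) := by
      intro u; simp only [hγ2']; rw [hH]; congr 1; ring
    have hGQ : G (γ1' 0) = γ1' A := by rw [hG', zero_add]
    have hHQ : H (γ1' 0) = γ2' B := by rw [hQ0, hH', zero_add]
    have a01 : dist (γ1' 0) (G (γ1' 0)) = A := by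
      rw [hGQ, h1', abs_of_nonpos (by linarith)]; ring
    have a12 : dist (G (γ1' 0)) (f (γ1' 0)) = B := by
      rw [hfap, G.dist_eq, hHQ, hQ0, h2', abs_of_nonpos (by linarith)]; ring
    have a02 : dist (γ1' 0) (f (γ1' 0)) = A + B := by
      have eG : G (γ1' (-A)) = γ1' 0 := by rw [hG']; norm_num
      rw [hfap, hHQ]
      nth_rewrite 1 [← eG]
      rw [G.dist_eq]
      exact C1 A B hA hB
    have a13 : dist (G (γ1' 0)) (f (G (γ1' 0))) = B + A := by
      have eH : H (γ2' (-B)) = γ1' 0 := by rw [hH']; norm_num; exact hQ0.symm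
      have hfg : f (G (γ1' 0)) = G (H (G (γ1' 0))) := rfl
      rw [hfg, G.dist_eq, hGQ]
      nth_rewrite 1 [← eH]
      rw [H.dist_eq]
      exact C2 B A hB hA
    set pts : ℕ → T := fun j => if j % 2 = 0 then γ1' 0 else G (γ1' 0) with hpts
    set c : ℕ → T := fun i => (f^(i/2)) (pts (i % 2)) with hc
    set L : ℕ → ℝ := fun i => if i % 2 = 0 then A else B with hL
    have hLpos : ∀ i, 0 < L i := by
      intro i; simp only [hL]; split <;> assumption
    have hLeven : ∀ i, i % 2 = 0 → L i = A := by
      intro i hi; simp only [hL, hi, reduceIte]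
    have hLodd : ∀ i, i % 2 = 1 → L i = B := by
      intro i hi; simp only [hL, hi]; norm_num
    have kc : ∀ k : ℕ, c (2*k) = (f^k) (γ1' 0) := by
      intro k
      simp only [hc, hpts]
      rw [show (2*k) % 2 = 0 by omega, show (2*k)/2 = k by omega]
      simp
    have kc1 : ∀ k : ℕ, c (2*k+1) = (f^k) (G (γ1' 0)) := by
      intro k
      simp only [hc, hpts]
      rw [show (2*k+1) % 2 = 1 by omega, show (2*k+1)/2 = k by omega]
      simp
    have hch1 : ∀ i, dist (c i) (c (i+1)) = L i := by
      intro i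
      obtain ⟨q, j, hj, rfl⟩ : ∃ q j, j < 2 ∧ i = 2*q + j :=
        ⟨i/2, i%2, Nat.mod_lt _ (by norm_num), by omega⟩
      interval_cases j
      · simp only [Nat.add_zero]
        rw [kc q, kc1 q, (f^q).dist_eq, a01, hLeven _ (by omega)]
      · rw [kc1 q, show 2*q+1+1 = 2*(q+1) by ring, kc (q+1),
          show (f^(q+1)) (γ1' 0) = (f^q) (f (γ1' 0)) by rw [pow_succ]; rfl,
          (f^q).dist_eq, a12, hLodd _ (by omega)]
    have hch2 : ∀ i, dist (c i) (c (i+2)) = L i + L (i+1) := by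
      intro i
      obtain ⟨q, j, hj, rfl⟩ : ∃ q j, j < 2 ∧ i = 2*q + j :=
        ⟨i/2, i%2, Nat.mod_lt _ (by norm_num), by omega⟩
      interval_cases j
      · simp only [Nat.add_zero]
        rw [kc q, show 2*q+2 = 2*(q+1) by ring, kc (q+1),
          show (f^(q+1)) (γ1' 0) = (f^q) (f (γ1' 0)) by rw [pow_succ]; rfl,
          (f^q).dist_eq, a02, hLeven _ (by omega), hLodd _ (by omega)]
      · rw [kc1 q, show 2*q+1+2 = 2*(q+1)+1 by ring, kc1 (q+1),
          show (f^(q+1)) (G (γ1' 0)) = (f^q) (f (G (γ1' 0))) by rw [pow_succ]; rfl,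
          (f^q).dist_eq, a13, hLodd _ (by omega), hLeven _ (by omega)]
    have hsumL : ∀ k : ℕ, ∑ i ∈ Finset.range (2*k), L i = k * (A + B) := by
      intro k
      induction k with
      | zero => simp
      | succ k ih =>
          rw [show 2*(k+1) = (2*k+1)+1 by ring, Finset.sum_range_succ, Finset.sum_range_succ, ih,
            hLeven _ (by omega), hLodd _ (by omega)]
          push_cast; ring
    apply tlen_ge f (γ1' 0)
    intro k
    have hcd := chain_dist h0 c L hLpos hch1 hch2 (2*k)
    rw [hsumL k] at hcd
    have hc0 : c 0 = γ1' 0 := by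
      have := kc 0; simpa using this
    rw [hc0, kc k] at hcd
    rw [hcd]
  · -- unbounded overlap : the two lines eventually coincide going forward
    have hIconv : ∀ u : ℝ, 0 ≤ u → u ∈ I := by
      intro u hu
      rcases eq_or_lt_of_le hu with rfl | hu'
      · exact h0I
      · obtain ⟨v, hvI, hv⟩ := not_bddAbove_iff.1 hbdd u
        have hv2 : γ1 (s₀ + v) = γ2 (t₀ + v) := hvI
        have hPZ : dist (γ1 s₀) (γ1 (s₀+u)) + dist (γ1 (s₀+u)) (γ1 (s₀+v)) =
            dist (γ1 s₀) (γ1 (s₀+v)) := by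
          rw [h1, h1, h1, abs_of_nonpos (by linarith : s₀ - (s₀+u) ≤ 0),
            abs_of_nonpos (by linarith : (s₀+u) - (s₀+v) ≤ 0),
            abs_of_nonpos (by linarith : s₀ - (s₀+v) ≤ 0)]
          ring
        have hPy : dist (γ1 s₀) (γ2 (t₀+u)) = dist (γ1 s₀) (γ1 (s₀+u)) := by
          nth_rewrite 1 [hpt]
          rw [h2, h1]; congr 1; ring
        have hyZ : dist (γ2 (t₀+u)) (γ1 (s₀+v)) = dist (γ1 (s₀+u)) (γ1 (s₀+v)) := by
          nth_rewrite 1 [hv2]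
          rw [h2, h1]; congr 1; ring
        exact mid_unique h0 hPZ hPy hyZ
    have hfk : ∀ k : ℕ, (f^k) (γ1 s₀) = γ1 (s₀ + k*(A+B)) := by
      intro k
      induction k with
      | zero => simp
      | succ k ih =>
          rw [pow_apply_succ, ih, hfap]
          have m1 : γ1 (s₀ + (k:ℝ)*(A+B)) = γ2 (t₀ + (k:ℝ)*(A+B)) :=
            hIconv _ (by positivity)
          rw [m1, hH]
          have m2 : γ2 (t₀ + (k:ℝ)*(A+B) + B) = γ1 (s₀ + ((k:ℝ)*(A+B)+B)) := by
            have h' := hIconv ((k:ℝ)*(A+B)+B) (by positivity)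
            have h'' : γ1 (s₀ + ((k:ℝ)*(A+B)+B)) = γ2 (t₀ + ((k:ℝ)*(A+B)+B)) := h'
            rw [show t₀ + (k:ℝ)*(A+B) + B = t₀ + ((k:ℝ)*(A+B)+B) by ring]
            exact h''.symm
          rw [m2, hG]
          congr 1
          push_cast; ring
    apply tlen_ge f (γ1 s₀)
    intro k
    rw [hfk k, h1]
    have hk0 : (0:ℝ) ≤ (k:ℝ)*(A+B) := by positivity
    rw [abs_of_nonpos (by linarith : s₀ - (s₀ + (k:ℝ)*(A+B)) ≤ 0)]
    ring_nf
    rfl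

lemma exists_common_point [Nonempty T] (h0 : ZeroHyperbolic T) (G H : T ≃ᵢ T)
    {γ1 γ2 : ℝ → T} {A B : ℝ}
    (h1 : ∀ s t : ℝ, dist (γ1 s) (γ1 t) = |s - t|)
    (h2 : ∀ s t : ℝ, dist (γ2 s) (γ2 t) = |s - t|)
    (hG : ∀ t : ℝ, G (γ1 t) = γ1 (t + A)) (hH : ∀ t : ℝ, H (γ2 t) = γ2 (t + B))
    (hA : 0 < A) (hB : 0 < B)
    (hsum : translationLength (G * H) = A + B) : ∃ s t : ℝ, γ1 s = γ2 t := by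
  classical
  by_contra hnc
  push_neg at hnc
  choose proj hproj using fun t : ℝ => exists_proj h0 h1 (γ2 t)
  set r : ℝ → ℝ := fun t => dist (γ2 t) (γ1 (proj t)) with hr
  have hrdef : ∀ t, dist (γ2 t) (γ1 (proj t)) = r t := fun t => rfl
  have hrpos : ∀ t, 0 < r t := by
    intro t
    rw [← hrdef]
    exact dist_pos.2 fun hh => hnc (proj t) t hh.symm
  have hrmin : ∀ t s, r t ≤ dist (γ2 t) (γ1 s) := by
    intro t s
    rw [hproj t s, hrdef]
    have := abs_nonneg (s - proj t); linarith
  have nofar : ∀ t t', |t - t'| ≤ r t + r t' := by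
    have key : ∀ t t', t' ≤ t → t - t' ≤ r t + r t' := by
      intro t t' hle
      by_contra hfar
      push_neg at hfar
      set Δ := |proj t - proj t'| with hΔ
      have hΔ0 : 0 ≤ Δ := abs_nonneg _
      have e0 : dist (γ2 t) (γ2 t') = t - t' := by
        rw [h2, abs_of_nonneg (by linarith)]
      have e1 : dist (γ2 t) (γ1 (proj t)) = r t := hrdef t
      have e2 : dist (γ1 (proj t)) (γ1 (proj t')) = Δ := by rw [h1]
      have e3 : dist (γ1 (proj t')) (γ2 t') = r t' := by rw [dist_comm]
      have e4 : dist (γ2 t) (γ1 (proj t')) = r t + Δ := by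
        rw [hproj t (proj t'), hrdef, hΔ, abs_sub_comm]
      have e5 : dist (γ1 (proj t)) (γ2 t') = r t' + Δ := by
        rw [dist_comm, hproj t' (proj t), hrdef, hΔ]
      have tri : t - t' ≤ r t + Δ + r t' := by
        have := dist_triangle4 (γ2 t) (γ1 (proj t)) (γ1 (proj t')) (γ2 t')
        rw [e0, e1, e2, e3] at this
        linarith
      have E : Δ = t - t' - r t - r t' := by
        have H4 := h0 (γ2 t) (γ1 (proj t')) (γ1 (proj t)) (γ2 t')
        rw [e4, e5, e0] at H4
        have e6 : dist (γ2 t) (γ1 (proj t)) = r t := e1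
        have e7 : dist (γ1 (proj t')) (γ2 t') = r t' := e3
        have e8 : dist (γ1 (proj t')) (γ1 (proj t)) = Δ := by rw [dist_comm]; exact e2
        rw [e6, e7, e8] at H4
        rcases le_max_iff.1 H4 with H' | H'
        · linarith
        · linarith
      have hcp : γ2 (t' + r t') = γ1 (proj t') := by
        apply mid_unique h0 (P := γ2 t') (Z := γ2 t)
        · rw [h2, h2, h2, abs_of_nonpos (by linarith [hrpos t'] : t' - (t' + r t') ≤ 0),
            abs_of_nonpos (by linarith [hrpos t] : (t' + r t') - t ≤ 0),
            abs_of_nonpos (by linarith : t' - t ≤ 0)]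
          ring
        · rw [h2, abs_of_nonpos (by linarith [hrpos t'] : t' - (t' + r t') ≤ 0), hrdef t']
          ring
        · rw [dist_comm (γ1 (proj t')) (γ2 t), e4, h2,
            abs_of_nonpos (by linarith [hrpos t] : (t' + r t') - t ≤ 0), E]
          ring
      exact hnc (proj t') (t' + r t') hcp.symm
    intro t t'
    rcases le_total t' t with hle | hle
    · rw [abs_of_nonneg (by linarith)]; exact key t t' hle
    · rw [abs_of_nonpos (by linarith)]
      have := key t' t hle
      linarith
  have hlip : ∀ t t', r t ≤ r t' + |t - t'| := by
    intro t t'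
    have hm := hrmin t (proj t')
    have tri := dist_triangle (γ2 t) (γ2 t') (γ1 (proj t'))
    have e : dist (γ2 t) (γ2 t') = |t - t'| := h2 t t'
    have e2 := hrdef t'
    linarith
  have hcont : Continuous r := by
    have : LipschitzWith 1 r := by
      apply LipschitzWith.of_le_add
      intro x y
      have := hlip x y
      rw [Real.dist_eq]
      linarith
    exact this.continuous
  have hr00 : 0 ≤ r 0 := (hrpos 0).le
  set R : ℝ := 2 * r 0 + 1 with hR
  have h0mem : (0:ℝ) ∈ Set.Icc (-R) R := by
    constructor <;> simp only [hR] <;> linarith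
  obtain ⟨ts, htmem, htmin⟩ := isCompact_Icc.exists_isMinOn ⟨0, h0mem⟩ hcont.continuousOn
  have hglob : ∀ t, r ts ≤ r t := by
    intro t
    by_cases hmem : t ∈ Set.Icc (-R) R
    · exact htmin hmem
    · have habs : R < |t| := by
        simp only [Set.mem_Icc, not_and_or, not_le] at hmem
        rcases hmem with hh | hh
        · rw [abs_of_neg (by simp only [hR] at hh ⊢; linarith)]
          simp only [hR] at hh ⊢; linarith
        · rw [abs_of_pos (by simp only [hR] at hh ⊢; linarith)]
          simp only [hR] at hh ⊢; linarith
      have hco : |t| ≤ r t + r 0 := by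
        have := nofar t 0
        simpa using this
      have hts0 : r ts ≤ r 0 := htmin h0mem
      simp only [hR] at habs
      linarith
  set δ := r ts with hδ
  have hδpos : 0 < δ := hrpos ts
  set γ1' : ℝ → T := fun u => γ1 (proj ts + u) with hγ1'
  set γ2' : ℝ → T := fun u => γ2 (ts + u) with hγ2'
  have h1' : ∀ s t : ℝ, dist (γ1' s) (γ1' t) = |s - t| := by
    intro s t; simp only [hγ1']; rw [h1]; congr 1; ring
  have h2' : ∀ s t : ℝ, dist (γ2' s) (γ2' t) = |s - t| := by
    intro s t; simp only [hγ2']; rw [h2]; congr 1; ring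
  have hmin1 : ∀ s, dist (γ2' 0) (γ1' s) = δ + |s| := by
    intro s
    simp only [hγ1', hγ2', add_zero]
    rw [hproj ts (proj ts + s), hrdef]
    congr 1
    simp
  have hmin2 : ∀ t, dist (γ1' 0) (γ2' t) = δ + |t| := by
    apply proj_formula h0 h2'
    · intro u
      rw [dist_comm]
      refine le_trans (hglob (ts + u)) ?_
      simp only [hγ1', hγ2', add_zero]
      exact hrmin (ts + u) (proj ts)
    · rw [dist_comm]
      have := hmin1 0
      simpa using this
  have BR := bridge h0 h1' h2' hδpos hmin1 hmin2
  have hG' : ∀ u : ℝ, G (γ1' u) = γ1' (u + A) := by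
    intro u; simp only [hγ1']; rw [hG]; congr 1; ring
  have hH' : ∀ u : ℝ, H (γ2' u) = γ2' (u + B) := by
    intro u; simp only [hγ2']; rw [hH]; congr 1; ring
  set f := G * H with hf
  have hfap : ∀ x, f x = G (H x) := fun x => rfl
  have eG : G (γ1' (-A)) = γ1' 0 := by rw [hG']; norm_num
  have eH : H (γ2' (-B)) = γ2' 0 := by rw [hH']; norm_num
  have hHB : H (γ2' 0) = γ2' B := by rw [hH', zero_add]
  have hGA : G (γ1' 0) = γ1' A := by rw [hG', zero_add]
  have d00 : dist (γ1' 0) (γ2' 0) = δ := by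
    have := hmin2 0; simpa using this
  -- the eight chain facts
  have b01 : dist (γ1' 0) (G (γ1' 0)) = A := by
    rw [hGA, h1', abs_of_nonpos (by linarith)]; ring
  have b12 : dist (G (γ1' 0)) (G (γ2' 0)) = δ := by rw [G.dist_eq]; exact d00
  have b23 : dist (G (γ2' 0)) (G (H (γ2' 0))) = B := by
    rw [G.dist_eq, hHB, h2', abs_of_nonpos (by linarith)]; ring
  have b34 : dist (G (H (γ2' 0))) (f (γ1' 0)) = δ := by
    rw [hfap, G.dist_eq, H.dist_eq, dist_comm]; exact d00
  have b02 : dist (γ1' 0) (G (γ2' 0)) = A + δ := by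
    nth_rewrite 1 [← eG]
    rw [G.dist_eq, BR]
    simp [abs_of_nonneg hA.le]
  have b13 : dist (G (γ1' 0)) (G (H (γ2' 0))) = δ + B := by
    rw [G.dist_eq, hHB, hmin2 B, abs_of_nonneg hB.le]
  have b24 : dist (G (γ2' 0)) (f (γ1' 0)) = B + δ := by
    rw [hfap, G.dist_eq]
    nth_rewrite 1 [← eH]
    rw [H.dist_eq, dist_comm, BR]
    simp [abs_of_nonneg hB.le]
    ring
  have b35 : dist (G (H (γ2' 0))) (f (G (γ1' 0))) = δ + A := by
    have hfg : f (G (γ1' 0)) = G (H (G (γ1' 0))) := rfl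
    rw [hfg, G.dist_eq, H.dist_eq, hGA, dist_comm, BR]
    simp [abs_of_nonneg hA.le]
    ring
  -- the chain
  set pts : ℕ → T := fun j =>
    if j % 4 = 0 then γ1' 0 else if j % 4 = 1 then G (γ1' 0)
    else if j % 4 = 2 then G (γ2' 0) else G (H (γ2' 0)) with hpts
  set c : ℕ → T := fun i => (f^(i/4)) (pts (i % 4)) with hc
  set L : ℕ → ℝ := fun i =>
    if i % 4 = 0 then A else if i % 4 = 1 then δ
    else if i % 4 = 2 then B else δ with hLdef
  have hLpos : ∀ i, 0 < L i := by
    intro i; simp only [hLdef]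
    split
    · exact hA
    · split
      · exact hδpos
      · split
        · exact hB
        · exact hδpos
  have hL0 : ∀ i, i % 4 = 0 → L i = A := by intro i hi; simp [hLdef, hi]
  have hL1 : ∀ i, i % 4 = 1 → L i = δ := by intro i hi; simp [hLdef, hi]
  have hL2 : ∀ i, i % 4 = 2 → L i = B := by intro i hi; simp [hLdef, hi]
  have hL3 : ∀ i, i % 4 = 3 → L i = δ := by intro i hi; simp [hLdef, hi]
  have kc0 : ∀ k : ℕ, c (4*k) = (f^k) (γ1' 0) := by
    intro k
    simp only [hc, hpts]
    rw [show (4*k) % 4 = 0 by omega, show (4*k)/4 = k by omega]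
    norm_num
  have kc1 : ∀ k : ℕ, c (4*k+1) = (f^k) (G (γ1' 0)) := by
    intro k
    simp only [hc, hpts]
    rw [show (4*k+1) % 4 = 1 by omega, show (4*k+1)/4 = k by omega]
    norm_num
  have kc2 : ∀ k : ℕ, c (4*k+2) = (f^k) (G (γ2' 0)) := by
    intro k
    simp only [hc, hpts]
    rw [show (4*k+2) % 4 = 2 by omega, show (4*k+2)/4 = k by omega]
    norm_num
  have kc3 : ∀ k : ℕ, c (4*k+3) = (f^k) (G (H (γ2' 0))) := by
    intro k
    simp only [hc, hpts]
    rw [show (4*k+3) % 4 = 3 by omega, show (4*k+3)/4 = k by omega]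
    norm_num
  have hch1 : ∀ i, dist (c i) (c (i+1)) = L i := by
    intro i
    obtain ⟨q, j, hj, rfl⟩ : ∃ q j, j < 4 ∧ i = 4*q + j :=
      ⟨i/4, i%4, Nat.mod_lt _ (by norm_num), by omega⟩
    interval_cases j
    · simp only [Nat.add_zero]
      rw [kc0 q, kc1 q, (f^q).dist_eq, b01, hL0 _ (by omega)]
    · rw [kc1 q, show 4*q+1+1 = 4*q+2 by ring, kc2 q, (f^q).dist_eq, b12, hL1 _ (by omega)]
    · rw [kc2 q, show 4*q+2+1 = 4*q+3 by ring, kc3 q, (f^q).dist_eq, b23, hL2 _ (by omega)]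
    · rw [kc3 q, show 4*q+3+1 = 4*(q+1) by ring, kc0 (q+1),
        show (f^(q+1)) (γ1' 0) = (f^q) (f (γ1' 0)) by rw [pow_succ]; rfl,
        (f^q).dist_eq, b34, hL3 _ (by omega)]
  have hch2 : ∀ i, dist (c i) (c (i+2)) = L i + L (i+1) := by
    intro i
    obtain ⟨q, j, hj, rfl⟩ : ∃ q j, j < 4 ∧ i = 4*q + j :=
      ⟨i/4, i%4, Nat.mod_lt _ (by norm_num), by omega⟩
    interval_cases j
    · simp only [Nat.add_zero]
      rw [kc0 q, show 4*q+2 = 4*q+2 from rfl, kc2 q, (f^q).dist_eq, b02,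
        hL0 _ (by omega), hL1 _ (by omega)]
    · rw [kc1 q, show 4*q+1+2 = 4*q+3 by ring, kc3 q, (f^q).dist_eq, b13,
        hL1 _ (by omega), hL2 _ (by omega)]
    · rw [kc2 q, show 4*q+2+2 = 4*(q+1) by ring, kc0 (q+1),
        show (f^(q+1)) (γ1' 0) = (f^q) (f (γ1' 0)) by rw [pow_succ]; rfl,
        (f^q).dist_eq, b24, hL2 _ (by omega), hL3 _ (by omega)]
    · rw [kc3 q, show 4*q+3+2 = 4*(q+1)+1 by ring, kc1 (q+1),
        show (f^(q+1)) (G (γ1' 0)) = (f^q) (f (G (γ1' 0))) by rw [pow_succ]; rfl,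
        (f^q).dist_eq, b35, hL3 _ (by omega), hL0 _ (by omega)]
  have hsumL : ∀ k : ℕ, ∑ i ∈ Finset.range (4*k), L i = k * (A + B + 2*δ) := by
    intro k
    induction k with
    | zero => simp
    | succ k ih =>
        rw [show 4*(k+1) = (((4*k+1)+1)+1)+1 by ring, Finset.sum_range_succ,
          Finset.sum_range_succ, Finset.sum_range_succ, Finset.sum_range_succ, ih,
          hL0 _ (by omega), hL1 _ (by omega), hL2 _ (by omega), hL3 _ (by omega)]
        push_cast; ring
  have hge : A + B + 2*δ ≤ translationLength f := by
    apply tlen_ge f (γ1' 0)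
    intro k
    have hcd := chain_dist h0 c L hLpos hch1 hch2 (4*k)
    rw [hsumL k] at hcd
    have hc0 : c 0 = γ1' 0 := by have := kc0 0; simpa using this
    rw [hc0, kc0 k] at hcd
    rw [hcd]
  rw [hf] at hge  -- translationLength (G*H)
  rw [hsum] at hge
  linarith

end Aux

/-- If `g, h` are hyperbolic isometries of an ℝ-tree with
`‖gh‖ = ‖g‖ + ‖h‖` (coherent overlap or meeting in a point), then
`‖gᵐhⁿ‖ = m‖g‖ + n‖h‖` for all positive integers `m, n`. -/
theorem stmt8 {T : Type*} [MetricSpace T] [Nonempty T] (hT : IsRTree T)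
    (g h : T ≃ᵢ T) (γg γh : ℝ → T)
    (hγg : ∀ s t : ℝ, dist (γg s) (γg t) = |s - t|)
    (hγh : ∀ s t : ℝ, dist (γh s) (γh t) = |s - t|)
    (hgpos : 0 < translationLength g) (hhpos : 0 < translationLength h)
    (hgtr : ∀ t : ℝ, g (γg t) = γg (t + translationLength g))
    (hhtr : ∀ t : ℝ, h (γh t) = γh (t + translationLength h))
    (hsum : translationLength (g * h) = translationLength g + translationLength h) :
    ∀ m n : ℕ, 1 ≤ m → 1 ≤ n →
      translationLength (g ^ m * h ^ n) =
        m * translationLength g + n * translationLength h := by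
  intro m n hm hn
  have h0 : ZeroHyperbolic T := hT.2
  set a := translationLength g with ha
  set b := translationLength h with hb
  -- powers translate along the same axes
  have pow_tr : ∀ (G : T ≃ᵢ T) (γ : ℝ → T) (A : ℝ), (∀ t, G (γ t) = γ (t + A)) →
      ∀ (k : ℕ) (t : ℝ), (G ^ k) (γ t) = γ (t + k * A) := by
    intro G γ A hGt k
    induction k with
    | zero => intro t; simp
    | succ k ih =>
        intro t
        rw [pow_apply_succ, ih, hGt]
        congr 1
        push_cast; ring
  have hGtr : ∀ t : ℝ, (g ^ m) (γg t) = γg (t + (m : ℝ) * a) := fun t => pow_tr g γg a hgtr m t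
  have hHtr : ∀ t : ℝ, (h ^ n) (γh t) = γh (t + (n : ℝ) * b) := fun t => pow_tr h γh b hhtr n t
  have hm1 : (1 : ℝ) ≤ (m : ℝ) := by exact_mod_cast hm
  have hn1 : (1 : ℝ) ≤ (n : ℝ) := by exact_mod_cast hn
  have hA : 0 < (m : ℝ) * a := by nlinarith
  have hB : 0 < (n : ℝ) * b := by nlinarith
  -- Step 1: the axes have a common point
  obtain ⟨s₀, t₀, hpt⟩ :=
    exists_common_point h0 g h hγg hγh hgtr hhtr hgpos hhpos hsum
  -- Step 2: the overlap is coherent (or a single point)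
  have hcoh : ∀ s t : ℝ, γg s = γh t → s - s₀ = t - t₀ := by
    intro s t hst
    by_contra hne
    have habs : |s - s₀| = |t - t₀| := by
      have e1 : dist (γg s) (γg s₀) = |s - s₀| := hγg s s₀
      rw [hst, hpt, hγh] at e1
      exact e1.symm
    have hneg : t - t₀ = -(s - s₀) := by
      rcases abs_eq_abs.1 habs with h' | h'
      · exact absurd h' hne
      · linarith
    have hD : s - s₀ ≠ 0 := by
      intro h'
      exact hne (by rw [h']; linarith)
    have key : ∀ u₀ v₀ u₁ v₁ : ℝ, γg u₀ = γh v₀ → γg u₁ = γh v₁ → u₀ < u₁ →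
        v₁ = v₀ - (u₁ - u₀) → False := by
      intro u₀ v₀ u₁ v₁ hc0 hc1 hlt hv1
      set D := u₁ - u₀ with hDdef
      have hDpos : 0 < D := by simp only [hDdef]; linarith
      set ε := min D (min a b) with hε
      have hεpos : 0 < ε := lt_min hDpos (lt_min hgpos hhpos)
      have hεD : ε ≤ D := min_le_left _ _
      have hεa : ε ≤ a := le_trans (min_le_right _ _) (min_le_left _ _)
      have hεb : ε ≤ b := le_trans (min_le_right _ _) (min_le_right _ _)
      have hxy : γg (u₀ + ε) = γh (v₀ - ε) := by
        apply mid_unique h0 (P := γg u₀) (Z := γg u₁)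
        · rw [hγg, hγg, hγg, abs_of_nonpos (by linarith : u₀ - (u₀ + ε) ≤ 0),
            abs_of_nonpos (by linarith : (u₀ + ε) - u₁ ≤ 0),
            abs_of_nonpos (by linarith : u₀ - u₁ ≤ 0)]
          ring
        · nth_rewrite 1 [hc0]
          rw [hγh, hγg, abs_of_nonneg (by linarith : 0 ≤ v₀ - (v₀ - ε)),
            abs_of_nonpos (by linarith : u₀ - (u₀ + ε) ≤ 0)]
          ring
        · nth_rewrite 1 [hc1]
          rw [dist_comm (γh (v₀ - ε)) (γh v₁), hγh, hγg, hv1,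
            abs_of_nonpos (by linarith : (v₀ - D) - (v₀ - ε) ≤ 0),
            abs_of_nonpos (by linarith : (u₀ + ε) - u₁ ≤ 0)]
          ring
      have hgx : g (γg (u₀ + ε - a)) = γg (u₀ + ε) := by
        rw [hgtr]; congr 1; ring
      have hhx : h (γh (v₀ - ε)) = γh (v₀ - ε + b) := hhtr _
      have htri : dist (γg (u₀ + ε - a)) (γh (v₀ - ε + b)) ≤ a + b - 2 * ε := by
        have t1 := dist_triangle (γg (u₀ + ε - a)) (γg u₀) (γh (v₀ - ε + b))
        have e1 : dist (γg (u₀ + ε - a)) (γg u₀) = a - ε := by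
          rw [hγg, abs_of_nonpos (by linarith : (u₀ + ε - a) - u₀ ≤ 0)]; ring
        have e2 : dist (γg u₀) (γh (v₀ - ε + b)) = b - ε := by
          rw [hc0, hγh, abs_of_nonpos (by linarith : v₀ - (v₀ - ε + b) ≤ 0)]; ring
        linarith
      have hkey : dist (γg (u₀ + ε)) ((g * h) (γg (u₀ + ε))) ≤ a + b - 2 * ε := by
        have hstep : dist (γg (u₀ + ε)) ((g * h) (γg (u₀ + ε))) =
            dist (γg (u₀ + ε - a)) (h (γg (u₀ + ε))) := by
          rw [show (g * h) (γg (u₀ + ε)) = g (h (γg (u₀ + ε))) from rfl]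
          nth_rewrite 1 [← hgx]
          rw [g.dist_eq]
        rw [hstep, hxy, hhx]
        exact htri
      have hle := tlen_le (g * h) (γg (u₀ + ε))
      rw [hsum] at hle
      have := le_trans hle hkey
      linarith
    rcases lt_or_gt_of_ne hD with h' | h'
    · exact key s t s₀ t₀ hst hpt (by linarith) (by linarith)
    · exact key s₀ t₀ s t hpt hst (by linarith) (by linarith)
  -- Step 3 : combine upper and lower bounds for the powers
  have hup := tlen_prod_le (g ^ m) (h ^ n) hγg hγh hGtr hHtr hA.le hB.le hpt
  have hlow := tlen_prod_ge_coherent h0 (g ^ m) (h ^ n) hγg hγh hGtr hHtr hA hB hpt hcoh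
  linarith
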